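/- Let ρ_w = α (U⊗V)|ψ_λ⟩⟨ψ_λ|(U⊗V)† + (1−α)/N² · I be the generalized Werner state on ℂ^N ⊗ ℂ^N, with α ∈ [0,1]. Then the mixed-state collectibility Y^max[ρ_w] = (max over orthonormal separable bases {|χ_j^sep⟩} of ∏_{j,k=1}^N ⟨χ_j^sep|ρ_w|χ_k^sep⟩)^{1/N} equals α^{N−1} y(λ) (α + ((1−α)/N²)·y(λ)^{−1/N}), where y(λ) = ((Σ_n √λ_n)/N)^{2N}. -/

import Mathlib

open Finset

private lemma pos_aux {α c : ℝ} (hα : 0 ≤ α) (hc : 0 ≤ c) (hac : 0 < α ∨ 0 < c)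
    {u : ℝ} (hu : 0 < u) : 0 < α * u ^ 2 + c := by
  rcases hac with h | h
  · have : 0 < α * u ^ 2 := by positivity
    linarith
  · nlinarith

private lemma opt_aux {N : ℕ} (hN : 0 < N) {α c s : ℝ} (hα : 0 ≤ α) (hc : 0 ≤ c)
    (hac : 0 < α ∨ 0 < c) (hs : 0 < s) (t : Fin N → ℝ) (ht : ∀ j, 0 ≤ t j)
    (hsum : ∑ j, t j ≤ s) :
    ∏ j, (t j ^ (2 * (N - 1)) * (α * t j ^ 2 + c)) ≤
      ((s / N) ^ (2 * (N - 1)) * (α * (s / N) ^ 2 + c)) ^ N := by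
  have hNR : (0:ℝ) < N := Nat.cast_pos.mpr hN
  set m : ℝ := s / N with hm_def
  have hm : 0 < m := div_pos hs hNR
  have hAm : 0 < α * m ^ 2 + c := pos_aux hα hc hac hm
  rcases eq_or_lt_of_le (Nat.succ_le_of_lt hN) with h1 | h2
  · -- N = 1
    have hN1 : N = 1 := h1.symm
    subst hN1
    simp only [Nat.sub_self, mul_zero, pow_zero, one_mul]
    rw [Fin.prod_univ_one, pow_one]
    have ht0 : t 0 ≤ s := by simpa using hsum
    have hm1 : m = s := by simp [hm_def]
    rw [hm1]
    nlinarith [mul_nonneg (mul_nonneg hα (sub_nonneg.mpr ht0)) (by linarith [ht 0] : (0:ℝ) ≤ s + t 0)]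
  · -- N ≥ 2
    have hN2 : 2 ≤ N := h2
    by_cases hzero : ∃ j, t j = 0
    · obtain ⟨j, hj⟩ := hzero
      have : ∏ j, (t j ^ (2 * (N - 1)) * (α * t j ^ 2 + c)) = 0 := by
        apply Finset.prod_eq_zero (Finset.mem_univ j)
        have : 2 * (N - 1) ≠ 0 := by omega
        simp [hj, zero_pow this]
      rw [this]
      positivity
    · push_neg at hzero
      haveI : Nonempty (Fin N) := ⟨⟨0, hN⟩⟩
      have htpos : ∀ j, 0 < t j := fun j => lt_of_le_of_ne (ht j) (Ne.symm (hzero j))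
      have hA : ∀ u : ℝ, 0 < u → 0 < α * u ^ 2 + c := fun u hu => pos_aux hα hc hac hu
      set g : ℝ → ℝ := fun u => ((2 * (N - 1) : ℕ) : ℝ) * Real.log u + Real.log (α * u ^ 2 + c)
        with hg_def
      set g' : ℝ → ℝ := fun u => ((2 * (N - 1) : ℕ) : ℝ) / u + (2 * α * u) / (α * u ^ 2 + c)
        with hg'_def
      set g'' : ℝ → ℝ := fun u => (2 * α * c - 2 * α ^ 2 * u ^ 2) / (α * u ^ 2 + c) ^ 2
          - ((2 * (N - 1) : ℕ) : ℝ) / u ^ 2 with hg''_def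
      have hpoly : ∀ u : ℝ, HasDerivAt (fun u : ℝ => α * u ^ 2 + c) (2 * α * u) u := by
        intro u
        have := ((hasDerivAt_pow 2 u).const_mul α).add_const c
        exact this.congr_deriv (by ring)
      have hd1 : ∀ u : ℝ, 0 < u → HasDerivAt g (g' u) u := by
        intro u hu
        have h2 := (Real.hasDerivAt_log hu.ne').const_mul ((2 * (N - 1) : ℕ) : ℝ)
        have h3 := (Real.hasDerivAt_log (hA u hu).ne').comp u (hpoly u)
        have := h2.add h3
        refine this.congr_deriv ?_
        rw [hg'_def]
        field_simp
        try ring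
      have hd2 : ∀ u : ℝ, 0 < u → HasDerivAt g' (g'' u) u := by
        intro u hu
        have hAu := hA u hu
        have h2 := (hasDerivAt_inv hu.ne').const_mul ((2 * (N - 1) : ℕ) : ℝ)
        have h3 := ((hasDerivAt_id u).const_mul (2 * α)).div (hpoly u) hAu.ne'
        have hcomb := (h2.congr_deriv rfl).add h3
        have heq : g' = fun u : ℝ =>
            ((2 * (N - 1) : ℕ) : ℝ) * u⁻¹ + (2 * α * u) / (α * u ^ 2 + c) := by
          funext x; rw [hg'_def]; ring
        rw [heq]
        refine hcomb.congr_deriv ?_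
        rw [hg''_def]
        simp only [id]
        field_simp
        try ring
      have hg'_nonneg : ∀ u : ℝ, 0 < u → 0 ≤ g' u := by
        intro u hu
        have hAu := hA u hu
        rw [hg'_def]
        have h1 : (0:ℝ) ≤ ((2 * (N - 1) : ℕ) : ℝ) / u := by positivity
        have h2 : (0:ℝ) ≤ (2 * α * u) / (α * u ^ 2 + c) := by
          apply div_nonneg (by positivity) hAu.le
        linarith
      have hg''_nonpos : ∀ u : ℝ, 0 < u → g'' u ≤ 0 := by
        intro u hu
        have hAu := hA u hu
        have hu2 : (0:ℝ) < u ^ 2 := by positivity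
        have h2N : (2:ℝ) ≤ ((2 * (N - 1) : ℕ) : ℝ) := by
          have : 2 ≤ 2 * (N - 1) := by omega
          exact_mod_cast this
        rw [hg''_def, sub_nonpos, div_le_div_iff₀ (by positivity) hu2]
        nlinarith [sq_nonneg (α * u ^ 2 - c), sq_nonneg (α * u ^ 2),
          sq_nonneg (α * u ^ 2 + c), mul_nonneg hα hc, hu2.le]
      have hcont : ContinuousOn g (Set.Ioi (0:ℝ)) :=
        fun u hu => ((hd1 u hu).continuousAt.continuousWithinAt)
      have hconc : ConcaveOn ℝ (Set.Ioi (0:ℝ)) g := by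
        apply concaveOn_of_hasDerivWithinAt2_nonpos (f' := g') (f'' := g'') (convex_Ioi 0) hcont
        · intro x hx
          rw [interior_Ioi] at hx
          exact (hd1 x hx).hasDerivWithinAt
        · intro x hx
          rw [interior_Ioi] at hx
          exact (hd2 x hx).hasDerivWithinAt
        · intro x hx
          rw [interior_Ioi] at hx
          exact hg''_nonpos x hx
      have hmono : MonotoneOn g (Set.Ioi (0:ℝ)) := by
        apply monotoneOn_of_hasDerivWithinAt_nonneg (f' := g') (convex_Ioi 0) hcont
        · intro x hx
          rw [interior_Ioi] at hx
          exact (hd1 x hx).hasDerivWithinAt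
        · intro x hx
          rw [interior_Ioi] at hx
          exact hg'_nonneg x hx
      have hwsum : ∑ _i : Fin N, (N:ℝ)⁻¹ = 1 := by
        rw [Finset.sum_const, Finset.card_univ, Fintype.card_fin, nsmul_eq_mul]
        field_simp
      have hjensen := hconc.le_map_sum (t := Finset.univ) (w := fun _ : Fin N => (N:ℝ)⁻¹)
          (p := t) (fun i _ => by positivity) hwsum (fun i _ => htpos i)
      simp only [smul_eq_mul] at hjensen
      have havg : ∑ i, (N:ℝ)⁻¹ * t i = (∑ i, t i) / N := by
        rw [← Finset.mul_sum]; ring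
      rw [havg] at hjensen
      have hTpos : 0 < (∑ i, t i) / N := by
        apply div_pos _ hNR
        exact Finset.sum_pos (fun i _ => htpos i) Finset.univ_nonempty
      have hTm : (∑ i, t i) / N ≤ m := by
        rw [hm_def]
        gcongr
      have hgm : g ((∑ i, t i) / N) ≤ g m := hmono hTpos hm hTm
      have hsumg : ∑ j, g (t j) ≤ N * g m := by
        have h1 : ∑ i, (N:ℝ)⁻¹ * g (t i) = (∑ i, g (t i)) / N := by
          rw [← Finset.mul_sum]; ring
        rw [h1] at hjensen
        have := le_trans hjensen hgm
        calc ∑ j, g (t j) = N * ((∑ j, g (t j)) / N) := by field_simp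
        _ ≤ N * g m := by
          apply mul_le_mul_of_nonneg_left this hNR.le
      have hprod : ∏ j, (t j ^ (2 * (N - 1)) * (α * t j ^ 2 + c)) =
          Real.exp (∑ j, g (t j)) := by
        rw [Real.exp_sum]
        apply Finset.prod_congr rfl
        intro j _
        rw [hg_def]
        simp only
        rw [Real.exp_add, Real.exp_nat_mul, Real.exp_log (htpos j),
          Real.exp_log (hA _ (htpos j))]
      have hrhs : ((s / N) ^ (2 * (N - 1)) * (α * (s / N) ^ 2 + c)) ^ N =
          Real.exp (N * g m) := by
        rw [Real.exp_nat_mul, hg_def]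
        simp only
        rw [Real.exp_add, Real.exp_nat_mul, Real.exp_log hm, Real.exp_log (hA _ hm)]
      rw [hprod, hrhs]
      exact Real.exp_le_exp.mpr hsumg

open Finset Matrix

private lemma unitary_dot {N : ℕ} {U : Matrix (Fin N) (Fin N) ℂ}
    (hU : Uᴴ * U = 1) (x y : Fin N → ℂ) :
    star (U.mulVec x) ⬝ᵥ U.mulVec y = star x ⬝ᵥ y := by
  rw [Matrix.star_mulVec, Matrix.dotProduct_mulVec, Matrix.vecMul_vecMul, hU, Matrix.vecMul_one]

private lemma col_norm {N : ℕ} {a : Fin N → Fin N → ℂ}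
    (ha : ∀ j k, star (a j) ⬝ᵥ a k = if j = k then (1 : ℂ) else 0)
    {U : Matrix (Fin N) (Fin N) ℂ} (hU : U ∈ Matrix.unitaryGroup (Fin N) ℂ) (n : Fin N) :
    ∑ j, Complex.normSq (Uᴴ.mulVec (a j) n) = 1 := by
  have hUU : (Uᴴ)ᴴ * Uᴴ = 1 := by
    rw [Matrix.conjTranspose_conjTranspose, ← Matrix.star_eq_conjTranspose]
    exact hU.2
  set Q : Matrix (Fin N) (Fin N) ℂ := Matrix.of (fun j i => Uᴴ.mulVec (a j) i) with hQ
  have hQQ : Q * Qᴴ = 1 := by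
    ext j k
    have := unitary_dot hUU (a k) (a j)
    rw [ha k j] at this
    simp only [Matrix.mul_apply, Matrix.conjTranspose_apply, Matrix.one_apply]
    calc ∑ i, Q j i * star (Q k i) = ∑ i, star (Uᴴ.mulVec (a k) i) * (Uᴴ.mulVec (a j) i) := by
          apply Finset.sum_congr rfl; intro i _; rw [hQ]; simp [mul_comm]
    _ = star (Uᴴ.mulVec (a k)) ⬝ᵥ Uᴴ.mulVec (a j) := rfl
    _ = if j = k then 1 else 0 := by rw [this]; simp [eq_comm]
  have hQQ' : Qᴴ * Q = 1 := mul_eq_one_comm.mp hQQ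
  have hdiag : (Qᴴ * Q) n n = 1 := by rw [hQQ']; simp
  have : ∑ j, (starRingEnd ℂ) (Q j n) * Q j n = 1 := by
    rw [← hdiag]
    simp [Matrix.mul_apply, Matrix.conjTranspose_apply]
  have h2 : ((∑ j, Complex.normSq (Uᴴ.mulVec (a j) n) : ℝ) : ℂ) = ((1:ℝ):ℂ) := by
    push_cast
    rw [← this]
    apply Finset.sum_congr rfl
    intro j _
    rw [← Complex.normSq_eq_conj_mul_self, hQ]
    simp
  exact_mod_cast h2

private noncomputable def four (N : ℕ) : Fin N → Fin N → ℂ :=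
  fun j n => Complex.exp (2 * Real.pi * Complex.I / N) ^ ((j : ℕ) * (n : ℕ)) / (Real.sqrt N : ℂ)

private lemma four_orthonormal {N : ℕ} (hN : 0 < N) (j k : Fin N) :
    star (four N j) ⬝ᵥ four N k = if j = k then (1 : ℂ) else 0 := by
  set ζ : ℂ := Complex.exp (2 * Real.pi * Complex.I / N) with hζdef
  have hζprim : IsPrimitiveRoot ζ N := by
    have := Complex.isPrimitiveRoot_exp N hN.ne'
    convert this using 2
    try ring
  have hζN : ζ ^ N = 1 := hζprim.pow_eq_one
  have hζne : ζ ≠ 0 := Complex.exp_ne_zero _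
  have hform : (2 * Real.pi * Complex.I / N : ℂ) = ((2 * Real.pi / N : ℝ) : ℂ) * Complex.I := by
    push_cast; ring
  have habs : Norm.norm ζ = 1 := by
    rw [hζdef, hform]; exact Complex.norm_exp_ofReal_mul_I _
  have hconj : (starRingEnd ℂ) ζ = ζ⁻¹ := (Complex.inv_eq_conj habs).symm
  have hNR : (0:ℝ) < (N:ℝ) := Nat.cast_pos.mpr hN
  have hsqrt : ((Real.sqrt N : ℂ)) * ((Real.sqrt N : ℂ)) = (N : ℂ) := by
    rw [← Complex.ofReal_mul, Real.mul_self_sqrt hNR.le]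
    simp
  have hterm : ∀ n : Fin N, (starRingEnd ℂ) (four N j n) * four N k n =
      (ζ ^ ((k : ℤ) - (j : ℤ))) ^ (n : ℕ) / N := by
    intro n
    simp only [four]
    rw [map_div₀, map_pow, hconj, Complex.conj_ofReal, div_mul_div_comm, hsqrt]
    congr 1
    have h1 : (ζ⁻¹) ^ ((j:ℕ) * (n:ℕ)) * ζ ^ ((k:ℕ) * (n:ℕ)) =
        ζ ^ (((k:ℤ) - (j:ℤ)) * (n:ℕ)) := by
      rw [inv_pow, ← zpow_natCast ζ ((j:ℕ) * (n:ℕ)), ← zpow_natCast ζ ((k:ℕ) * (n:ℕ)),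
        ← _root_.zpow_neg, ← zpow_add₀ hζne]
      congr 1
      push_cast
      ring
    rw [h1, _root_.zpow_mul, zpow_natCast]
  have hdot : star (four N j) ⬝ᵥ four N k =
      (∑ n : Fin N, (ζ ^ ((k : ℤ) - (j : ℤ))) ^ (n : ℕ)) / N := by
    simp only [dotProduct, Pi.star_apply, Complex.star_def]
    rw [Finset.sum_congr rfl (fun n _ => hterm n), ← Finset.sum_div]
  have hNC : (N : ℂ) ≠ 0 := Nat.cast_ne_zero.mpr hN.ne'
  rw [hdot]
  by_cases hjk : j = k
  · subst hjk
    simp only [sub_self, zpow_zero, one_pow]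
    rw [Finset.sum_const, Finset.card_univ, Fintype.card_fin, nsmul_eq_mul, mul_one,
      div_self hNC]
    simp
  · rw [if_neg hjk]
    set m : ℤ := (k : ℤ) - (j : ℤ) with hm
    have hm0 : m ≠ 0 := by
      rw [hm]
      have : (j:ℕ) ≠ (k:ℕ) := fun h => hjk (Fin.ext h)
      omega
    have hr1 : ζ ^ m ≠ 1 := by
      intro h
      have hdvd := (hζprim.zpow_eq_one_iff_dvd m).mp h
      have hle := Int.le_of_dvd (abs_pos.mpr hm0) ((dvd_abs _ _).mpr hdvd)
      have hj := j.isLt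
      have hk := k.isLt
      have habs' : |(k:ℤ) - (j:ℤ)| < N := by
        rw [abs_lt]
        constructor <;> omega
      rw [hm] at hle
      exact absurd hle (not_le.mpr habs')
    have hrN : (ζ ^ m) ^ N = 1 := by
      rw [← zpow_natCast (ζ ^ m) N, ← _root_.zpow_mul, mul_comm, _root_.zpow_mul, zpow_natCast, hζN,
        _root_.one_zpow]
    rw [Fin.sum_univ_eq_sum_range (fun n => (ζ ^ m) ^ n) N, geom_sum_eq hr1, hrN]
    simp

open Finset Matrix

private lemma four_mul_conj {N : ℕ} (hN : 0 < N) (j n : Fin N) :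
    four N j n * (starRingEnd ℂ) (four N j n) = ((N : ℝ)⁻¹ : ℝ) := by
  rw [Complex.mul_conj]
  have hform : (2 * Real.pi * Complex.I / N : ℂ) = ((2 * Real.pi / N : ℝ) : ℂ) * Complex.I := by
    push_cast; ring
  have habs : Norm.norm (Complex.exp (2 * Real.pi * Complex.I / N)) = 1 := by
    rw [hform]; exact Complex.norm_exp_ofReal_mul_I _
  have hNR : (0:ℝ) < (N:ℝ) := Nat.cast_pos.mpr hN
  have : Complex.normSq (four N j n) = (N:ℝ)⁻¹ := by
    rw [four, Complex.normSq_div, ← Complex.sq_norm, norm_pow, habs, one_pow, one_pow,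
      Complex.normSq_ofReal, Real.mul_self_sqrt hNR.le]
    simp
  rw [this]

open Finset Matrix

private lemma prod_entries {N : ℕ} (x y : Fin N → ℂ) (c : ℂ) :
    ∏ j, ∏ k, (x j * y k + if j = k then c else 0) =
      (∏ j, (x j * y j + c)) * (∏ j, x j) ^ (N - 1) * (∏ j, y j) ^ (N - 1) := by
  have key : ∀ j : Fin N, ∏ k, (x j * y k + if j = k then c else 0) =
      (x j * y j + c) * (x j ^ (N - 1) * ∏ k ∈ Finset.univ.erase j, y k) := by
    intro j
    rw [← Finset.mul_prod_erase Finset.univ _ (Finset.mem_univ j), if_pos rfl]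
    congr 1
    have h : ∀ k ∈ Finset.univ.erase j, x j * y k + (if j = k then c else 0) = x j * y k := by
      intro k hk
      rw [if_neg (fun h => (Finset.mem_erase.mp hk).1 h.symm), add_zero]
    rw [Finset.prod_congr rfl h, Finset.prod_mul_distrib, Finset.prod_const,
      Finset.card_erase_of_mem (Finset.mem_univ j), Finset.card_univ, Fintype.card_fin]
  have swap : ∏ j : Fin N, ∏ k ∈ Finset.univ.erase j, y k = ∏ k : Fin N, y k ^ (N - 1) := by
    rw [Finset.prod_comm' (t' := (Finset.univ : Finset (Fin N)))
      (s' := fun k => Finset.univ.erase k)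
      (fun j k => by simp [Finset.mem_erase, ne_comm])]
    apply Finset.prod_congr rfl
    intro k _
    rw [Finset.prod_const, Finset.card_erase_of_mem (Finset.mem_univ k), Finset.card_univ,
      Fintype.card_fin]
  calc ∏ j, ∏ k, (x j * y k + if j = k then c else 0)
      = ∏ j, ((x j * y j + c) * (x j ^ (N - 1) * ∏ k ∈ Finset.univ.erase j, y k)) :=
        Finset.prod_congr rfl (fun j _ => key j)
    _ = (∏ j, (x j * y j + c)) *
        ((∏ j, x j ^ (N - 1)) * ∏ j, ∏ k ∈ Finset.univ.erase j, y k) := by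
        rw [Finset.prod_mul_distrib, Finset.prod_mul_distrib]
    _ = _ := by rw [swap, Finset.prod_pow, Finset.prod_pow]; ring

private lemma dot_chi {N : ℕ} (a b a' b' : Fin N → ℂ) :
    star (fun p : Fin N × Fin N => a p.1 * b p.2) ⬝ᵥ
      (fun p : Fin N × Fin N => a' p.1 * b' p.2) = (star a ⬝ᵥ a') * (star b ⬝ᵥ b') := by
  simp only [dotProduct, Pi.star_apply]
  rw [Fintype.sum_prod_type, Finset.sum_mul_sum]
  apply Finset.sum_congr rfl
  intro i _
  apply Finset.sum_congr rfl
  intro j _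
  simp only [star_mul']
  ring

private lemma rho_mulVec {n : Type*} [Fintype n] [DecidableEq n] (αc cc : ℂ) (v x : n → ℂ) :
    ((αc • Matrix.vecMulVec v (star v) + cc • (1 : Matrix n n ℂ)).mulVec x)
      = (αc * (star v ⬝ᵥ x)) • v + cc • x := by
  rw [Matrix.add_mulVec, Matrix.smul_mulVec, Matrix.smul_mulVec, Matrix.one_mulVec]
  congr 1
  funext p
  simp only [Matrix.mulVec, Matrix.vecMulVec_apply, dotProduct, Pi.smul_apply, smul_eq_mul,
    Finset.mul_sum, Pi.star_apply]
  rw [Finset.sum_mul]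
  apply Finset.sum_congr rfl
  intro q _
  ring




open Finset Matrix in
/-- The mixed-state collectibility of the generalized Werner state
`ρ_w = α (U⊗V)|ψ_λ⟩⟨ψ_λ|(U⊗V)† + (1-α)/N² · I` equals
`α^{N-1} y(λ) (α + ((1-α)/N²) y(λ)^{-1/N})` with `y(λ) = ((Σ √λ_n)/N)^{2N}`. -/
theorem werner_collectibility {N : ℕ} (hN : 0 < N) (α : ℝ) (hα0 : 0 ≤ α) (hα1 : α ≤ 1)
    (l : Fin N → ℝ) (hl : ∀ n, 0 ≤ l n) (hsum : ∑ n, l n = 1)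
    (U V : Matrix (Fin N) (Fin N) ℂ)
    (hU : U ∈ Matrix.unitaryGroup (Fin N) ℂ) (hV : V ∈ Matrix.unitaryGroup (Fin N) ℂ) :
    ∃ M : ℝ,
      IsGreatest
        { y : ℝ | ∃ a b : Fin N → Fin N → ℂ,
            (∀ j k, star (a j) ⬝ᵥ a k = if j = k then (1 : ℂ) else 0) ∧
            (∀ j k, star (b j) ⬝ᵥ b k = if j = k then (1 : ℂ) else 0) ∧
            (y : ℂ) = ∏ j : Fin N, ∏ k : Fin N,
              star (fun p : Fin N × Fin N => a j p.1 * b j p.2) ⬝ᵥ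
                (((α : ℂ) • Matrix.vecMulVec
                    (fun p : Fin N × Fin N => ∑ n, U p.1 n * V p.2 n * (Real.sqrt (l n) : ℂ))
                    (star fun p : Fin N × Fin N =>
                      ∑ n, U p.1 n * V p.2 n * (Real.sqrt (l n) : ℂ))
                  + (((1 - α) / N ^ 2 : ℝ) : ℂ) • (1 : Matrix (Fin N × Fin N) (Fin N × Fin N) ℂ)).mulVec
                  (fun p : Fin N × Fin N => a k p.1 * b k p.2)) } M ∧
      M ^ ((N : ℝ)⁻¹)
        = α ^ (N - 1) * ((∑ n, Real.sqrt (l n)) / N) ^ (2 * N) *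
            (α + (1 - α) / N ^ 2 *
              (((∑ n, Real.sqrt (l n)) / N) ^ (2 * N)) ^ (-(1 : ℝ) / N)) := by
  classical
  haveI : Nonempty (Fin N) := ⟨⟨0, hN⟩⟩
  have hNR : (0:ℝ) < N := Nat.cast_pos.mpr hN
  have hU1 : Uᴴ * U = 1 := by rw [← Matrix.star_eq_conjTranspose]; exact hU.1
  have hV1 : Vᴴ * V = 1 := by rw [← Matrix.star_eq_conjTranspose]; exact hV.1
  set c : ℝ := (1 - α) / (N:ℝ) ^ 2 with hc_def
  set s : ℝ := ∑ n, Real.sqrt (l n) with hs_def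
  set v : Fin N × Fin N → ℂ :=
    fun p => ∑ n, U p.1 n * V p.2 n * (Real.sqrt (l n) : ℂ) with hv_def
  set ρ : Matrix (Fin N × Fin N) (Fin N × Fin N) ℂ :=
    (α : ℂ) • Matrix.vecMulVec v (star v) + ((c : ℝ) : ℂ) • 1 with hρ_def
  set m : ℝ := s / N with hm_def
  have hc0 : 0 ≤ c := div_nonneg (by linarith) (by positivity)
  have hac : 0 < α ∨ 0 < c := by
    rcases eq_or_lt_of_le hα0 with h | h
    · right
      rw [hc_def, ← h]
      positivity
    · exact Or.inl h
  have hs1 : (1:ℝ) ≤ s := by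
    rw [hs_def, ← hsum]
    apply Finset.sum_le_sum
    intro n _
    have h1 : l n ≤ 1 := hsum ▸ Finset.single_le_sum (fun i _ => hl i) (Finset.mem_univ n)
    rw [Real.le_sqrt (hl n) (hl n)]
    nlinarith [hl n]
  have hs0 : 0 < s := lt_of_lt_of_le one_pos hs1
  have hm0 : 0 < m := div_pos hs0 hNR
  have hamc : 0 < α * m ^ 2 + c := pos_aux hα0 hc0 hac hm0
  -- expansion of the overlaps
  have hz : ∀ (a b : Fin N → Fin N → ℂ) (j : Fin N),
      (star v ⬝ᵥ fun p : Fin N × Fin N => a j p.1 * b j p.2) =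
        ∑ n, (Real.sqrt (l n) : ℂ) * (Uᴴ *ᵥ a j) n * (Vᴴ *ᵥ b j) n := by
    intro a b j
    have expand : ∀ p : Fin N × Fin N, (starRingEnd ℂ) (v p) * (a j p.1 * b j p.2) =
        ∑ n, (Real.sqrt (l n) : ℂ) * (((starRingEnd ℂ) (U p.1 n)) * a j p.1) *
          (((starRingEnd ℂ) (V p.2 n)) * b j p.2) := by
      intro p
      simp only [hv_def]
      rw [map_sum, Finset.sum_mul]
      apply Finset.sum_congr rfl
      intro n _
      simp only [_root_.map_mul, Complex.conj_ofReal]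
      ring
    calc (star v ⬝ᵥ fun p : Fin N × Fin N => a j p.1 * b j p.2)
        = ∑ p : Fin N × Fin N, (starRingEnd ℂ) (v p) * (a j p.1 * b j p.2) := by
          simp only [dotProduct, Pi.star_apply, Complex.star_def]
      _ = ∑ p : Fin N × Fin N, ∑ n, (Real.sqrt (l n) : ℂ) *
            (((starRingEnd ℂ) (U p.1 n)) * a j p.1) * (((starRingEnd ℂ) (V p.2 n)) * b j p.2) :=
          Finset.sum_congr rfl (fun p _ => expand p)
      _ = ∑ n, ∑ p : Fin N × Fin N, (Real.sqrt (l n) : ℂ) *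
            (((starRingEnd ℂ) (U p.1 n)) * a j p.1) * (((starRingEnd ℂ) (V p.2 n)) * b j p.2) :=
          Finset.sum_comm
      _ = ∑ n, (Real.sqrt (l n) : ℂ) * (Uᴴ *ᵥ a j) n * (Vᴴ *ᵥ b j) n := by
          apply Finset.sum_congr rfl
          intro n _
          have hUv : (Uᴴ *ᵥ a j) n = ∑ p1, ((starRingEnd ℂ) (U p1 n)) * a j p1 := by
            simp [Matrix.mulVec, dotProduct, Matrix.conjTranspose_apply]
          have hVv : (Vᴴ *ᵥ b j) n = ∑ p2, ((starRingEnd ℂ) (V p2 n)) * b j p2 := by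
            simp [Matrix.mulVec, dotProduct, Matrix.conjTranspose_apply]
          rw [Fintype.sum_prod_type, hUv, hVv, mul_assoc, Finset.sum_mul_sum, Finset.mul_sum]
          apply Finset.sum_congr rfl
          intro p1 _
          rw [Finset.mul_sum]
          apply Finset.sum_congr rfl
          intro p2 _
          ring
  -- entry formula
  have hentry : ∀ (a b : Fin N → Fin N → ℂ),
      (∀ j k, star (a j) ⬝ᵥ a k = if j = k then (1 : ℂ) else 0) →
      (∀ j k, star (b j) ⬝ᵥ b k = if j = k then (1 : ℂ) else 0) →
      ∀ j k, (star (fun p : Fin N × Fin N => a j p.1 * b j p.2) ⬝ᵥ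
          ρ.mulVec (fun p : Fin N × Fin N => a k p.1 * b k p.2))
        = ((α : ℂ) * star (star v ⬝ᵥ fun p : Fin N × Fin N => a j p.1 * b j p.2)) *
            (star v ⬝ᵥ fun p : Fin N × Fin N => a k p.1 * b k p.2)
          + (if j = k then ((c : ℝ) : ℂ) else 0) := by
    intro a b ha hb j k
    have hsd : ∀ (w : Fin N × Fin N → ℂ), star w ⬝ᵥ v = star (star v ⬝ᵥ w) :=
      fun w => Matrix.star_dotProduct _ _
    rw [hρ_def, rho_mulVec, dotProduct_add, dotProduct_smul, dotProduct_smul,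
      dot_chi, ha, hb, hsd]
    by_cases hjk : j = k <;> simp [hjk, smul_eq_mul] <;> ring
  -- value formula
  have hval : ∀ (a b : Fin N → Fin N → ℂ),
      (∀ j k, star (a j) ⬝ᵥ a k = if j = k then (1 : ℂ) else 0) →
      (∀ j k, star (b j) ⬝ᵥ b k = if j = k then (1 : ℂ) else 0) →
      (∏ j : Fin N, ∏ k : Fin N,
          star (fun p : Fin N × Fin N => a j p.1 * b j p.2) ⬝ᵥ
            ρ.mulVec (fun p : Fin N × Fin N => a k p.1 * b k p.2))
        = ((α ^ (N * (N - 1)) *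
            ∏ j, (Norm.norm (star v ⬝ᵥ fun p : Fin N × Fin N => a j p.1 * b j p.2)
                ^ (2 * (N - 1)) *
              (α * Norm.norm (star v ⬝ᵥ fun p : Fin N × Fin N => a j p.1 * b j p.2) ^ 2
                + c)) : ℝ) : ℂ) := by
    intro a b ha hb
    have hterm : ∀ j, ((α:ℂ) * star (star v ⬝ᵥ fun p : Fin N × Fin N => a j p.1 * b j p.2)) *
        (star v ⬝ᵥ fun p : Fin N × Fin N => a j p.1 * b j p.2) + ((c:ℝ):ℂ)
        = ((α * Norm.norm (star v ⬝ᵥ fun p : Fin N × Fin N => a j p.1 * b j p.2) ^ 2 + c : ℝ) : ℂ) := by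
      intro j
      rw [mul_assoc, Complex.star_def, ← Complex.normSq_eq_conj_mul_self, ← Complex.sq_norm]
      push_cast
      ring
    have hR : α ^ (N * (N - 1)) *
        ∏ j, (Norm.norm (star v ⬝ᵥ fun p : Fin N × Fin N => a j p.1 * b j p.2) ^ (2 * (N - 1)) *
          (α * Norm.norm (star v ⬝ᵥ fun p : Fin N × Fin N => a j p.1 * b j p.2) ^ 2 + c))
        = (∏ j, (α * Norm.norm (star v ⬝ᵥ fun p : Fin N × Fin N => a j p.1 * b j p.2) ^ 2 + c)) *
          α ^ (N * (N - 1)) *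
          (∏ j, Norm.norm (star v ⬝ᵥ fun p : Fin N × Fin N => a j p.1 * b j p.2) ^ 2) ^ (N - 1) := by
      rw [Finset.prod_mul_distrib, ← Finset.prod_pow]
      have h : ∀ j : Fin N, Norm.norm (star v ⬝ᵥ fun p : Fin N × Fin N => a j p.1 * b j p.2) ^ (2 * (N - 1))
          = (Norm.norm (star v ⬝ᵥ fun p : Fin N × Fin N => a j p.1 * b j p.2) ^ 2) ^ (N - 1) :=
        fun j => by rw [← pow_mul]
      rw [Finset.prod_congr rfl (fun j _ => h j)]
      ring
    calc (∏ j : Fin N, ∏ k : Fin N,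
          star (fun p : Fin N × Fin N => a j p.1 * b j p.2) ⬝ᵥ
            ρ.mulVec (fun p : Fin N × Fin N => a k p.1 * b k p.2))
        = ∏ j : Fin N, ∏ k : Fin N,
            (((α : ℂ) * star (star v ⬝ᵥ fun p : Fin N × Fin N => a j p.1 * b j p.2)) *
              (star v ⬝ᵥ fun p : Fin N × Fin N => a k p.1 * b k p.2)
              + (if j = k then ((c:ℝ):ℂ) else 0)) := by
          apply Finset.prod_congr rfl
          intro j _
          apply Finset.prod_congr rfl
          intro k _
          exact hentry a b ha hb j k
      _ = (∏ j, (((α : ℂ) * star (star v ⬝ᵥ fun p : Fin N × Fin N => a j p.1 * b j p.2)) *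
              (star v ⬝ᵥ fun p : Fin N × Fin N => a j p.1 * b j p.2) + ((c:ℝ):ℂ))) *
            (∏ j, ((α : ℂ) * star (star v ⬝ᵥ fun p : Fin N × Fin N => a j p.1 * b j p.2))) ^ (N - 1) *
            (∏ j, (star v ⬝ᵥ fun p : Fin N × Fin N => a j p.1 * b j p.2)) ^ (N - 1) :=
          prod_entries _ _ _
      _ = _ := by
          rw [Finset.prod_congr rfl (fun j _ => hterm j)]
          have hzz : ∀ j : Fin N, ((α:ℂ) * star (star v ⬝ᵥ fun p : Fin N × Fin N => a j p.1 * b j p.2)) *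
              (star v ⬝ᵥ fun p : Fin N × Fin N => a j p.1 * b j p.2)
              = (α : ℂ) * ((Norm.norm (star v ⬝ᵥ fun p : Fin N × Fin N => a j p.1 * b j p.2) ^ 2 : ℝ) : ℂ) := by
            intro j
            rw [mul_assoc, Complex.star_def, ← Complex.normSq_eq_conj_mul_self, ← Complex.sq_norm]
            try push_cast
            try ring
          have hstep : (∏ j, ((α:ℂ) * star (star v ⬝ᵥ fun p : Fin N × Fin N => a j p.1 * b j p.2))) ^ (N-1) *
              (∏ j, (star v ⬝ᵥ fun p : Fin N × Fin N => a j p.1 * b j p.2)) ^ (N-1)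
              = ((α:ℂ)) ^ (N*(N-1)) *
                ((((∏ j, Norm.norm (star v ⬝ᵥ fun p : Fin N × Fin N => a j p.1 * b j p.2) ^ 2) ^ (N-1) : ℝ)) : ℂ) := by
            rw [← mul_pow, ← Finset.prod_mul_distrib]
            rw [Finset.prod_congr rfl (fun j _ => hzz j), Finset.prod_mul_distrib,
              Finset.prod_const, Finset.card_univ, Fintype.card_fin, mul_pow, ← pow_mul]
            push_cast
            ring
          rw [mul_assoc, hstep]
          norm_cast
          linear_combination -hR
  -- the constraint
  have hbound : ∀ (a b : Fin N → Fin N → ℂ),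
      (∀ j k, star (a j) ⬝ᵥ a k = if j = k then (1 : ℂ) else 0) →
      (∀ j k, star (b j) ⬝ᵥ b k = if j = k then (1 : ℂ) else 0) →
      ∑ j, Norm.norm (star v ⬝ᵥ fun p : Fin N × Fin N => a j p.1 * b j p.2) ≤ s := by
    intro a b ha hb
    have habs : ∀ j, Norm.norm (star v ⬝ᵥ fun p : Fin N × Fin N => a j p.1 * b j p.2) ≤
        ∑ n, Real.sqrt (l n) *
          (Norm.norm ((Uᴴ *ᵥ a j) n) * Norm.norm ((Vᴴ *ᵥ b j) n)) := by
      intro j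
      rw [hz a b j]
      refine le_trans (norm_sum_le _ _) ?_
      apply Finset.sum_le_sum
      intro n _
      rw [norm_mul, norm_mul, Complex.norm_real, Real.norm_of_nonneg (Real.sqrt_nonneg _), mul_assoc]
    calc ∑ j, Norm.norm (star v ⬝ᵥ fun p : Fin N × Fin N => a j p.1 * b j p.2)
        ≤ ∑ j, ∑ n, Real.sqrt (l n) *
            (Norm.norm ((Uᴴ *ᵥ a j) n) * Norm.norm ((Vᴴ *ᵥ b j) n)) :=
          Finset.sum_le_sum (fun j _ => habs j)
      _ = ∑ n, Real.sqrt (l n) *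
            ∑ j, (Norm.norm ((Uᴴ *ᵥ a j) n) * Norm.norm ((Vᴴ *ᵥ b j) n)) := by
          rw [Finset.sum_comm]
          apply Finset.sum_congr rfl
          intro n _
          rw [Finset.mul_sum]
      _ ≤ ∑ n, Real.sqrt (l n) * 1 := by
          apply Finset.sum_le_sum
          intro n _
          apply mul_le_mul_of_nonneg_left _ (Real.sqrt_nonneg _)
          have h2 : ∀ j : Fin N, Norm.norm ((Uᴴ *ᵥ a j) n) * Norm.norm ((Vᴴ *ᵥ b j) n) ≤
              (Complex.normSq ((Uᴴ *ᵥ a j) n) + Complex.normSq ((Vᴴ *ᵥ b j) n)) / 2 := by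
            intro j
            rw [← Complex.sq_norm, ← Complex.sq_norm]
            nlinarith [sq_nonneg (Norm.norm ((Uᴴ *ᵥ a j) n) - Norm.norm ((Vᴴ *ᵥ b j) n))]
          refine le_trans (Finset.sum_le_sum (fun j _ => h2 j)) ?_
          rw [← Finset.sum_div, Finset.sum_add_distrib, col_norm ha hU n, col_norm hb hV n]
          norm_num
      _ = s := by
          rw [hs_def]
          apply Finset.sum_congr rfl
          intro n _
          rw [mul_one]
  refine ⟨α ^ (N * (N - 1)) * (m ^ (2 * (N - 1)) * (α * m ^ 2 + c)) ^ N, ⟨?_, ?_⟩, ?_⟩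
  · -- membership
    have hao : ∀ j k, star ((fun j => U *ᵥ four N j) j) ⬝ᵥ (fun j => U *ᵥ four N j) k =
        if j = k then (1:ℂ) else 0 := by
      intro j k
      rw [unitary_dot hU1]
      exact four_orthonormal hN j k
    have hbo : ∀ j k, star ((fun j => V *ᵥ star (four N j)) j) ⬝ᵥ
        (fun j => V *ᵥ star (four N j)) k = if j = k then (1:ℂ) else 0 := by
      intro j k
      rw [unitary_dot hV1, star_star, dotProduct_comm, four_orthonormal hN k j]
      simp [eq_comm]
    have hzF : ∀ j, (star v ⬝ᵥ fun p : Fin N × Fin N =>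
        (fun j => U *ᵥ four N j) j p.1 * (fun j => V *ᵥ star (four N j)) j p.2) = ((m:ℝ):ℂ) := by
      intro j
      rw [hz (fun j => U *ᵥ four N j) (fun j => V *ᵥ star (four N j)) j]
      have hA : ∀ n, (Uᴴ *ᵥ (fun j => U *ᵥ four N j) j) n = four N j n := by
        intro n
        simp only
        rw [Matrix.mulVec_mulVec, hU1, Matrix.one_mulVec]
      have hB : ∀ n, (Vᴴ *ᵥ (fun j => V *ᵥ star (four N j)) j) n =
          (starRingEnd ℂ) (four N j n) := by
        intro n
        simp only
        rw [Matrix.mulVec_mulVec, hV1, Matrix.one_mulVec]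
        simp [Complex.star_def]
      calc ∑ n, (Real.sqrt (l n) : ℂ) * (Uᴴ *ᵥ (fun j => U *ᵥ four N j) j) n *
            (Vᴴ *ᵥ (fun j => V *ᵥ star (four N j)) j) n
          = ∑ n, (Real.sqrt (l n) : ℂ) * (((N : ℝ)⁻¹ : ℝ) : ℂ) := by
            apply Finset.sum_congr rfl
            intro n _
            rw [hA, hB, mul_assoc, four_mul_conj hN]
        _ = ((m:ℝ):ℂ) := by
            rw [← Finset.sum_mul, hm_def, hs_def]
            push_cast
            ring
    refine ⟨fun j => U *ᵥ four N j, fun j => V *ᵥ star (four N j), hao, hbo, ?_⟩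
    rw [hval _ _ hao hbo, Complex.ofReal_inj]
    congr 1
    have habsm : ∀ j : Fin N, Norm.norm (star v ⬝ᵥ fun p : Fin N × Fin N =>
        (fun j => U *ᵥ four N j) j p.1 * (fun j => V *ᵥ star (four N j)) j p.2) = m := by
      intro j
      rw [hzF j, Complex.norm_real, Real.norm_of_nonneg hm0.le]
    rw [Finset.prod_congr rfl (fun j _ => by rw [habsm j]), Finset.prod_const,
      Finset.card_univ, Fintype.card_fin]
  · -- upper bound
    rintro y ⟨a, b, ha, hb, hy⟩
    rw [hval a b ha hb] at hy
    have hy' : y = α ^ (N * (N - 1)) *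
        ∏ j, (Norm.norm (star v ⬝ᵥ fun p : Fin N × Fin N => a j p.1 * b j p.2)
            ^ (2 * (N - 1)) *
          (α * Norm.norm (star v ⬝ᵥ fun p : Fin N × Fin N => a j p.1 * b j p.2) ^ 2 + c)) :=
      by exact_mod_cast hy
    rw [hy']
    apply mul_le_mul_of_nonneg_left _ (pow_nonneg hα0 _)
    exact opt_aux hN hα0 hc0 hac hs0 _ (fun j => norm_nonneg _) (hbound a b ha hb)
  · -- final arithmetic
    have hB : (0:ℝ) ≤ α ^ (N-1) * (m ^ (2*(N-1)) * (α * m ^ 2 + c)) :=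
      mul_nonneg (pow_nonneg hα0 _) (mul_nonneg (pow_nonneg hm0.le _) hamc.le)
    have hMe : α ^ (N*(N-1)) * (m ^ (2*(N-1)) * (α * m ^ 2 + c)) ^ N
        = (α ^ (N-1) * (m ^ (2*(N-1)) * (α * m ^ 2 + c))) ^ N := by
      conv_rhs => rw [mul_pow, ← pow_mul]
      rw [Nat.mul_comm N (N-1)]
    rw [hMe, Real.pow_rpow_inv_natCast hB hN.ne']
    have hrpow : ((m ^ (2*N) : ℝ)) ^ ((-(1:ℝ))/N) = (m ^ 2)⁻¹ := by
      rw [← Real.rpow_natCast m (2*N), ← Real.rpow_mul hm0.le]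
      have hexp : ((2*N : ℕ):ℝ) * (-(1:ℝ)/N) = -((2:ℕ):ℝ) := by
        push_cast
        field_simp
      rw [hexp, Real.rpow_neg hm0.le, Real.rpow_natCast]
    rw [hrpow]
    have h2N : 2*N = 2*(N-1) + 2 := by omega
    rw [h2N, pow_add]
    field_simp
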